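/- Tsallis q-integral of a multivariate Gaussian density: let d ≥ 1, let Σ be a symmetric positive-definite real d×d matrix, let μ ∈ ℝ^d, and let q > 0. Writing φ(x) := ((2π)^d · det Σ)^{−1/2} · exp(−(1/2)·⟨x − μ, Σ⁻¹(x − μ)⟩) for the Gaussian density, one has ∫_{ℝ^d} φ(x)^q dx = q^{−d/2} · (2π)^{d(1−q)/2} · (det Σ)^{(1−q)/2}. Consequently, the Tsallis entropy T_q(φ) := (1 − ∫ φ^q)/(q − 1) of the Gaussian equals (1 − exp((1−q)·Σ_{i} [½·ln(2π) + ln σ_i − ln q/(2(1−q))]))/(q−1), where σ_i² are the diagonal entries in an LDL decomposition of Σ (so that Π σ_i² = det Σ). -/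

import Mathlib

open MeasureTheory
open Matrix Real

lemma posDef_smul {d : ℕ} {M : Matrix (Fin d) (Fin d) ℝ} (hM : M.PosDef) {c : ℝ} (hc : 0 < c) :
    (c • M).PosDef := by
  constructor
  · unfold Matrix.IsHermitian
    rw [Matrix.conjTranspose_smul, hM.1]
    simp
  · intro x hx
    exact (hM.smul hc).2 hx

open scoped MatrixOrder in
lemma gauss_int (d : ℕ) (M : Matrix (Fin d) (Fin d) ℝ) (hM : M.PosDef) :
    (∫ x : Fin d → ℝ, Real.exp (-(1/2) * dotProduct x (M.mulVec x)))
      = (2*Real.pi) ^ ((d:ℝ)/2) * M.det ^ (-(1/2) : ℝ) := by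
  have hMi : M⁻¹.PosDef := hM.inv
  set T : Matrix (Fin d) (Fin d) ℝ := CFC.sqrt M⁻¹ with hTdef
  have hT : T.PosSemidef := (CFC.sqrt_nonneg M⁻¹).posSemidef
  have hTT : T * T = M⁻¹ := CFC.sqrt_mul_sqrt_self M⁻¹ hMi.posSemidef.nonneg
  have hTsymm : Tᵀ = T := hT.isHermitian
  have hdet2 : T.det * T.det = (M.det)⁻¹ := by
    rw [← Matrix.det_mul, hTT, Matrix.det_nonsing_inv, Ring.inverse_eq_inv]
  have hTdet_nonneg : 0 ≤ T.det := by
    rw [hT.isHermitian.det_eq_prod_eigenvalues]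
    exact Finset.prod_nonneg fun i _ => hT.eigenvalues_nonneg i
  have hMdet : 0 < M.det := hM.det_pos
  have hTdet_pos : 0 < T.det := by
    rcases lt_or_eq_of_le hTdet_nonneg with h | h
    · exact h
    · exfalso
      rw [← h, mul_zero] at hdet2
      exact (inv_pos.2 hMdet).ne' hdet2.symm
  have hTunit : IsUnit T.det := hTdet_pos.ne'.isUnit
  have hTMT : T * M * T = 1 := by
    have hM' : M = T⁻¹ * T⁻¹ := by
      rw [← Matrix.mul_inv_rev, hTT, Matrix.nonsing_inv_nonsing_inv _ (by
        simpa using hMdet.ne')]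
    rw [hM', Matrix.mul_assoc, Matrix.mul_assoc, Matrix.nonsing_inv_mul _ hTunit,
      Matrix.mul_one, Matrix.mul_nonsing_inv _ hTunit]
  -- change of variables x = T y
  set L : (Fin d → ℝ) →ₗ[ℝ] (Fin d → ℝ) := Matrix.toLin' T with hLdef
  have hLdet : LinearMap.det L = T.det := LinearMap.det_toLin' T
  have hmap : Measure.map L volume = ENNReal.ofReal |(T.det)⁻¹| • volume := by
    rw [Measure.map_linearMap_addHaar_eq_smul_addHaar volume
      (by rw [hLdet]; exact hTdet_pos.ne'), hLdet]
  have hLcont : Continuous L := L.continuous_of_finiteDimensional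
  set g : (Fin d → ℝ) → ℝ :=
    fun x => Real.exp (-(1/2) * dotProduct x (M.mulVec x)) with hgdef
  have hgcont : Continuous g := by
    apply Real.continuous_exp.comp
    apply Continuous.mul continuous_const
    exact (continuous_id.dotProduct ((continuous_const (y := M)).matrix_mulVec continuous_id))
  have key : ∫ x, g x = T.det * ∫ y, g (T.mulVec y) := by
    have h1 : (∫ y, g (L y)) = ∫ x, g x ∂(Measure.map L volume) :=
      (integral_map hLcont.measurable.aemeasurable hgcont.aestronglyMeasurable).symm
    rw [hmap, integral_smul_measure, ENNReal.toReal_ofReal (abs_nonneg _),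
      abs_of_pos (inv_pos.2 hTdet_pos)] at h1
    have h2 : ∀ y, L y = T.mulVec y := fun y => Matrix.toLin'_apply T y
    simp_rw [h2] at h1
    rw [h1, smul_eq_mul, ← mul_assoc, mul_inv_cancel₀ hTdet_pos.ne', one_mul]
  have hquad : ∀ y : Fin d → ℝ,
      dotProduct (T.mulVec y) (M.mulVec (T.mulVec y)) = ∑ i, (y i)^2 := by
    intro y
    have hTy : T.mulVec y = Matrix.vecMul y T := by
      conv_lhs => rw [← hTsymm]
      exact Matrix.mulVec_transpose T y
    rw [Matrix.mulVec_mulVec, dotProduct_mulVec, hTy, Matrix.vecMul_vecMul,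
      ← Matrix.mul_assoc, hTMT, Matrix.vecMul_one]
    simp [dotProduct, sq]
  have hprod : (∫ y : Fin d → ℝ, g (T.mulVec y)) = Real.sqrt (2 * Real.pi) ^ d := by
    have heq : ∀ y : Fin d → ℝ, g (T.mulVec y) = ∏ i, Real.exp (-(1/2) * (y i)^2) := by
      intro y
      rw [hgdef]
      simp only
      rw [hquad y, Finset.mul_sum, Real.exp_sum]
    simp_rw [heq]
    rw [integral_fintype_prod_volume_eq_pow (ι := Fin d) (fun t : ℝ => Real.exp (-(1/2) * t^2))]
    simp only [Fintype.card_fin]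
    congr 1
    have hg1 : (∫ t : ℝ, Real.exp (-(1/2) * t^2)) = Real.sqrt (Real.pi / (1/2)) := by
      simpa using integral_gaussian (1/2)
    rw [hg1]
    norm_num
    rw [mul_comm]
  have h1 : Real.sqrt (2*Real.pi) ^ d = (2*Real.pi) ^ ((d:ℝ)/2) := by
    rw [Real.sqrt_eq_rpow, ← Real.rpow_natCast ((2*Real.pi) ^ (1/2:ℝ)) d,
      ← Real.rpow_mul (by positivity)]
    congr 1
    ring
  have h2 : T.det = M.det ^ (-(1/2) : ℝ) := by
    have e1 : T.det = Real.sqrt (M.det⁻¹) := by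
      rw [← hdet2, Real.sqrt_mul_self hTdet_nonneg]
    rw [e1, Real.sqrt_eq_rpow, Real.inv_rpow hMdet.le, ← Real.rpow_neg hMdet.le]
  rw [key, hprod, h1, h2]
  ring

/-- Tsallis `q`-integral of a multivariate Gaussian density:
`∫ φ^q = q^(-d/2) * (2π)^(d(1-q)/2) * (det Σ)^((1-q)/2)`, and the resulting
formula for the Tsallis entropy `(1 - ∫ φ^q)/(q - 1)` in terms of the diagonal
entries `σ_i²` of an LDL decomposition of `Σ` (so that `∏ σ_i² = det Σ`). -/
theorem gaussian_tsallis_integral (d : ℕ) (hd : 1 ≤ d)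
    (S : Matrix (Fin d) (Fin d) ℝ) (hS : S.PosDef)
    (m : Fin d → ℝ) (q : ℝ) (hq : 0 < q)
    (φ : (Fin d → ℝ) → ℝ)
    (hφ : ∀ x, φ x = ((2 * Real.pi) ^ d * S.det) ^ (-(1 / 2 : ℝ)) *
      Real.exp (-(1 / 2) * dotProduct (x - m) (S⁻¹.mulVec (x - m)))) :
    (∫ x : Fin d → ℝ, φ x ^ q)
        = q ^ (-(d : ℝ) / 2) * (2 * Real.pi) ^ ((d : ℝ) * (1 - q) / 2)
          * S.det ^ ((1 - q) / 2) ∧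
      ∀ σ : Fin d → ℝ, (∀ i, 0 < σ i) → (∏ i, σ i ^ 2) = S.det → q ≠ 1 →
        (1 - ∫ x : Fin d → ℝ, φ x ^ q) / (q - 1)
          = (1 - Real.exp ((1 - q) * ∑ i, (Real.log (2 * Real.pi) / 2
              + Real.log (σ i) - Real.log q / (2 * (1 - q))))) / (q - 1) := by
  have h2π : (0:ℝ) < 2 * Real.pi := by positivity
  have hSd : 0 < S.det := hS.det_pos
  set P : ℝ := (2 * Real.pi) ^ d * S.det with hP
  have hPpos : 0 < P := by positivity
  set A : Matrix (Fin d) (Fin d) ℝ := q • S⁻¹ with hA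
  have hApd : A.PosDef := posDef_smul hS.inv hq
  have hAdet : A.det = q ^ d * S.det⁻¹ := by
    rw [hA, Matrix.det_smul, Matrix.det_nonsing_inv, Ring.inverse_eq_inv]
    simp [Fintype.card_fin]
  have hAdp : 0 < A.det := hApd.det_pos
  have hmain : (∫ x : Fin d → ℝ, φ x ^ q)
      = P ^ (-(1/2 : ℝ) * q) * ((2*Real.pi) ^ ((d:ℝ)/2) * A.det ^ (-(1/2):ℝ)) := by
    have hpt : ∀ x : Fin d → ℝ, φ x ^ q
        = P ^ (-(1/2:ℝ)*q) *
          Real.exp (-(1/2) * dotProduct (x - m) (A.mulVec (x - m))) := by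
      intro x
      rw [hφ x, Real.mul_rpow (by positivity) (Real.exp_pos _).le]
      congr 1
      · rw [← Real.rpow_mul hPpos.le]
      · rw [← Real.exp_mul]
        congr 1
        rw [hA, Matrix.smul_mulVec, dotProduct_smul, smul_eq_mul]
        ring
    simp_rw [hpt]
    rw [MeasureTheory.integral_const_mul]
    congr 1
    rw [integral_sub_right_eq_self
      (fun x : Fin d → ℝ => Real.exp (-(1/2) * dotProduct x (A.mulVec x))) m]
    exact gauss_int d A hApd
  have hconst : P ^ (-(1/2 : ℝ) * q) * ((2*Real.pi) ^ ((d:ℝ)/2) * A.det ^ (-(1/2):ℝ))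
      = q ^ (-(d:ℝ)/2) * (2*Real.pi) ^ ((d:ℝ)*(1-q)/2) * S.det ^ ((1-q)/2) := by
    rw [Real.rpow_def_of_pos hPpos, Real.rpow_def_of_pos h2π, Real.rpow_def_of_pos hAdp,
      Real.rpow_def_of_pos hq, Real.rpow_def_of_pos h2π, Real.rpow_def_of_pos hSd]
    simp only [← Real.exp_add]
    congr 1
    have hlogP : Real.log P = d * Real.log (2*Real.pi) + Real.log S.det := by
      rw [hP, Real.log_mul (by positivity) hSd.ne', Real.log_pow]
    have hlogA : Real.log A.det = d * Real.log q - Real.log S.det := by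
      rw [hAdet, Real.log_mul (by positivity) (inv_ne_zero hSd.ne'), Real.log_pow,
        Real.log_inv]
      ring
    rw [hlogP, hlogA]
    ring
  have part1 : (∫ x : Fin d → ℝ, φ x ^ q)
      = q ^ (-(d:ℝ)/2) * (2*Real.pi) ^ ((d:ℝ)*(1-q)/2) * S.det ^ ((1-q)/2) :=
    hmain.trans hconst
  refine ⟨part1, ?_⟩
  intro σ hσ hσdet hq1
  have h1q : (1 : ℝ) - q ≠ 0 := sub_ne_zero.2 fun h => hq1 h.symm
  have hlogdet : Real.log S.det = 2 * ∑ i, Real.log (σ i) := by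
    rw [← hσdet, Real.log_prod (fun i _ => pow_ne_zero 2 (hσ i).ne')]
    simp_rw [Real.log_pow]
    rw [Finset.mul_sum]
    norm_num
  have hsum : ((1:ℝ) - q) * ∑ i, (Real.log (2 * Real.pi) / 2
      + Real.log (σ i) - Real.log q / (2 * (1 - q)))
      = Real.log q * (-(d:ℝ)/2) + Real.log (2*Real.pi) * ((d:ℝ)*(1-q)/2)
        + Real.log S.det * ((1-q)/2) := by
    rw [Finset.sum_sub_distrib, Finset.sum_add_distrib, Finset.sum_const, Finset.sum_const,
      Finset.card_univ, Fintype.card_fin, hlogdet, nsmul_eq_mul]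
    have e : (1 - q) * (Real.log q / (2 * (1 - q))) = Real.log q / 2 := by
      rw [mul_div_assoc', mul_comm 2 (1 - q), mul_div_mul_left _ _ h1q]
    linear_combination (-(d:ℝ)) * e
  congr 2
  rw [part1, Real.rpow_def_of_pos hq, Real.rpow_def_of_pos h2π, Real.rpow_def_of_pos hSd,
    ← Real.exp_add, ← Real.exp_add, hsum]
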